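/- A connected graph with n vertices and feedback edge set number k (i.e., with exactly n - 1 + k edges) contains at most 2^k · C(n,2) distinct paths (as vertex subsets with path structure, counting each unordered path once). -/

import Mathlib

open SimpleGraph Finset

section Helpers

variable {V : Type*} [Fintype V] [DecidableEq V]


private lemma countP_edges_parity {G : SimpleGraph V} {u v : V} (p : G.Walk u v) (w : V) :
    p.edges.countP (fun e => decide (w ∈ e)) % 2 =
      ((if w = u then 1 else 0) + (if w = v then 1 else 0)) % 2 := by
  induction p with
  | nil => simp only [Walk.edges_nil, List.countP_nil]; split_ifs <;> rfl
  | @cons a c b h q ih =>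
    rw [Walk.edges_cons, List.countP_cons]
    have hac : a ≠ c := h.ne
    simp only [decide_eq_true_eq, Sym2.mem_iff]
    by_cases h1 : w = a <;> by_cases h2 : w = c
    · exact absurd (h1.symm.trans h2) hac
    · rw [if_pos (Or.inl h1), if_pos h1]
      rw [if_neg h2] at ih
      omega
    · rw [if_pos (Or.inr h2), if_neg h1]
      rw [if_pos h2] at ih
      omega
    · rw [if_neg (fun hh : w = a ∨ w = c => hh.elim h1 h2), if_neg h1]
      rw [if_neg h2] at ih
      omega

private lemma walk_eq_of_edges_iff {G : SimpleGraph V} :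
    ∀ {u v : V} (p q : G.Walk u v), p.IsPath → q.IsPath →
      (∀ e, e ∈ p.edges ↔ e ∈ q.edges) → p = q := by
  intro u v p
  induction p with
  | nil =>
    intro q _ _ hiff
    cases q with
    | nil => rfl
    | cons h' q' =>
      exact absurd ((hiff _).mpr (by rw [Walk.edges_cons]; exact List.mem_cons_self))
        (by simp)
  | @cons a c b h t ih =>
    intro q hp hq hiff
    cases q with
    | nil => exact absurd ((hiff s(a, c)).mp (by simp)) (by simp)
    | @cons a x b h' q' =>
      rw [Walk.cons_isPath_iff] at hp hq
      have hmem : s(a, c) ∈ Walk.edges (Walk.cons h' q') := (hiff _).mp (by simp)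
      rw [Walk.edges_cons, List.mem_cons] at hmem
      have hxc : c = x := by
        rcases hmem with hh | hh
        · exact Sym2.congr_right.mp hh
        · exact absurd (Walk.fst_mem_support_of_mem_edges q' hh) hq.2
      subst hxc
      have ht : t = q' := by
        refine ih q' hp.1 hq.1 fun e => ⟨fun he => ?_, fun he => ?_⟩
        · have := (hiff e).mp (by rw [Walk.edges_cons]; exact List.mem_cons_of_mem _ he)
          rw [Walk.edges_cons, List.mem_cons] at this
          rcases this with rfl | hh
          · exact absurd (Walk.fst_mem_support_of_mem_edges t he) hp.2
          · exact hh
        · have := (hiff e).mpr (by rw [Walk.edges_cons]; exact List.mem_cons_of_mem _ he)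
          rw [Walk.edges_cons, List.mem_cons] at this
          rcases this with rfl | hh
          · exact absurd (Walk.fst_mem_support_of_mem_edges q' he) hq.2
          · exact hh
      rw [ht]


private lemma even_subgraph_of_acyclic_empty {T : SimpleGraph V} (hT : T.IsAcyclic)
    (D : Finset (Sym2 V)) (hDT : ∀ e ∈ D, e ∈ T.edgeSet)
    (hdeg : ∀ w : V, Even ((D.filter (fun e => w ∈ e)).card)) : D = ∅ := by
  classical
  by_contra hne
  obtain ⟨e₀, he₀⟩ := Finset.nonempty_of_ne_empty hne
  set H : SimpleGraph V := SimpleGraph.fromEdgeSet (D : Set (Sym2 V)) with hH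
  have hHT : H ≤ T := by
    rw [hH, ← fromEdgeSet_edgeSet T]
    exact fromEdgeSet_mono (fun e he => hDT e (Finset.mem_coe.mp he))
  have hHa : H.IsAcyclic := fun v c hc => hT _ (hc.mapLe hHT)
  have hHedges : ∀ {x y : V} (r : H.Walk x y), ∀ e ∈ r.edges, e ∈ D := by
    intro x y r e he
    have := r.edges_subset_edgeSet he
    rw [hH, edgeSet_fromEdgeSet] at this
    exact Finset.mem_coe.mp this.1
  -- a starting edge gives a path of length 1
  have hndiag : ∀ e ∈ D, ¬ e.IsDiag := fun e he => T.not_isDiag_of_mem_edgeSet (hDT e he)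
  obtain ⟨a₀, b₀⟩ := e₀
  have hab : H.Adj a₀ b₀ := by
    rw [hH, fromEdgeSet_adj]
    exact ⟨Finset.mem_coe.mpr he₀, fun h => hndiag _ he₀ (by simp [h])⟩
  -- pick a path of maximal length
  let P : ℕ → Prop := fun l => ∃ (x y : V) (r : H.Walk x y), r.IsPath ∧ r.length = l
  have hP1 : P 1 := ⟨a₀, b₀, Walk.cons hab Walk.nil, by simp [hab.ne], rfl⟩
  have hbdd : ∀ l, P l → l ∈ Finset.range (Fintype.card V + 1) := by
    rintro l ⟨x, y, r, hr, rfl⟩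
    exact Finset.mem_range.mpr (by have := hr.length_lt; omega)
  let F : Finset ℕ := (Finset.range (Fintype.card V + 1)).filter P
  have hFne : F.Nonempty := ⟨1, Finset.mem_filter.mpr ⟨hbdd 1 hP1, hP1⟩⟩
  obtain ⟨u, v, p, hp, hplen⟩ := (Finset.mem_filter.mp (F.max'_mem hFne)).2
  have hmax : ∀ (x y : V) (r : H.Walk x y), r.IsPath → r.length ≤ p.length := by
    intro x y r hr
    have : r.length ∈ F := Finset.mem_filter.mpr ⟨hbdd _ ⟨x, y, r, hr, rfl⟩, ⟨x, y, r, hr, rfl⟩⟩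
    rw [hplen]
    exact F.le_max' _ this
  have h1p : 1 ≤ p.length := by
    rw [hplen]
    exact F.le_max' 1 (Finset.mem_filter.mpr ⟨hbdd 1 hP1, hP1⟩)
  clear hplen
  cases p with
  | nil => simp at h1p
  | @cons _ c _ h t =>
    -- the first edge
    have hfD : s(u, c) ∈ D := hHedges (Walk.cons h t) s(u, c)
      (by rw [Walk.edges_cons]; exact List.mem_cons_self)
    have hfmem : s(u, c) ∈ D.filter (fun e => u ∈ e) :=
      Finset.mem_filter.mpr ⟨hfD, Sym2.mem_mk_left _ _⟩
    have hcard : 1 < (D.filter (fun e => u ∈ e)).card := by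
      obtain ⟨r, hr⟩ := hdeg u
      have : 0 < (D.filter (fun e => u ∈ e)).card := Finset.card_pos.mpr ⟨_, hfmem⟩
      omega
    obtain ⟨e', he', hne'⟩ := Finset.exists_mem_ne hcard s(u, c)
    rw [Finset.mem_filter] at he'
    obtain ⟨y, rfl⟩ := Sym2.mem_iff_exists.mp he'.2
    have hya : u ≠ y := fun hh => hndiag _ he'.1 (by simp [hh])
    have hadj : H.Adj u y := by
      rw [hH, fromEdgeSet_adj]
      exact ⟨Finset.mem_coe.mpr he'.1, hya⟩
    rw [Walk.cons_isPath_iff] at hp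
    by_cases hy : y ∈ (Walk.cons h t).support
    · -- build a cycle in H, contradiction
      have htu : ((Walk.cons h t).takeUntil y hy).IsPath :=
        (Walk.cons_isPath_iff h t).mpr hp |>.takeUntil hy
      have hecyc : s(y, u) ∉ ((Walk.cons h t).takeUntil y hy).edges := by
        intro hmem
        have hmem' := Walk.edges_takeUntil_subset _ hy hmem
        rw [Walk.edges_cons, List.mem_cons] at hmem'
        rcases hmem' with hh | hh
        · rw [Sym2.eq_iff] at hh
          rcases hh with ⟨h1, _⟩ | ⟨h1, _⟩
          · exact hya h1.symm
          · exact hne' (by rw [h1])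
        · exact hp.2 (Walk.snd_mem_support_of_mem_edges t hh)
      exact hHa (Walk.cons hadj.symm ((Walk.cons h t).takeUntil y hy))
        ((Walk.cons_isCycle_iff ((Walk.cons h t).takeUntil y hy) hadj.symm).mpr ⟨htu, hecyc⟩)
    · -- extend the path, contradicting maximality
      have hlong : (Walk.cons hadj.symm (Walk.cons h t)).IsPath :=
        (Walk.cons_isPath_iff _ _).mpr ⟨(Walk.cons_isPath_iff h t).mpr hp, hy⟩
      have := hmax _ _ _ hlong
      simp only [Walk.length_cons] at this ⊢
      omega


private lemma reachable_delete {G : SimpleGraph V} {a₀ b₀ : V}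
    (hr : (G \ fromEdgeSet {s(a₀, b₀)}).Reachable a₀ b₀) :
    ∀ {a b : V}, G.Reachable a b → (G \ fromEdgeSet {s(a₀, b₀)}).Reachable a b := by
  intro a b hab
  obtain ⟨p⟩ := hab
  induction p with
  | nil => exact Reachable.refl _
  | @cons x y z h q ih =>
    refine Reachable.trans ?_ ih
    by_cases he : s(x, y) = s(a₀, b₀)
    · rw [Sym2.eq_iff] at he
      rcases he with ⟨rfl, rfl⟩ | ⟨rfl, rfl⟩
      · exact hr
      · exact hr.symm
    · refine Adj.reachable ?_
      rw [sdiff_adj, fromEdgeSet_adj]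
      exact ⟨h, fun hcon => he hcon.1⟩

private lemma exists_spanning_tree (G : SimpleGraph V) (hG : G.Connected) :
    ∃ T : SimpleGraph V, T ≤ G ∧ T.IsTree := by
  classical
  obtain ⟨m, hm⟩ : ∃ m, G.edgeSet.ncard ≤ m := ⟨_, le_rfl⟩
  induction m generalizing G with
  | zero =>
    refine ⟨G, le_rfl, hG, ?_⟩
    intro v c hc
    cases c with
    | nil => exact hc.ne_nil rfl
    | cons h q =>
      have : G.edgeSet = ∅ :=
        (Set.ncard_eq_zero G.edgeSet.toFinite).mp (le_antisymm hm (Nat.zero_le _))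
      exact absurd (G.mem_edgeSet.mpr h) (by rw [this]; exact Set.notMem_empty _)
  | succ m ih =>
    by_cases hac : G.IsAcyclic
    · exact ⟨G, le_rfl, hG, hac⟩
    · rw [isAcyclic_iff_forall_adj_isBridge] at hac
      push_neg at hac
      obtain ⟨v, w, hadj, hbr⟩ := hac
      rw [isBridge_iff] at hbr
      push_neg at hbr
      have hreach : (G \ fromEdgeSet {s(v, w)}).Reachable v w := hbr
      set G' : SimpleGraph V := G \ fromEdgeSet {s(v, w)} with hG'
      have hG'conn : G'.Connected := by
        have hnev : Nonempty V := hG.nonempty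
        refine Connected.mk ?_
        intro a b
        exact reachable_delete hreach (hG.preconnected a b)
      have hG'edge : G'.edgeSet = G.edgeSet \ {s(v, w)} := by
        rw [hG', edgeSet_sdiff, edgeSet_fromEdgeSet, edgeSet_sdiff_sdiff_isDiag]
      have hmem : s(v, w) ∈ G.edgeSet := G.mem_edgeSet.mpr hadj
      have hcard : G'.edgeSet.ncard ≤ m := by
        rw [hG'edge, Set.ncard_diff_singleton_of_mem hmem]
        have : 1 ≤ G.edgeSet.ncard := by
          rw [Nat.one_le_iff_ne_zero]
          intro h0
          have := (Set.ncard_eq_zero G.edgeSet.toFinite).mp h0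
          exact absurd hmem (by rw [this]; exact Set.notMem_empty _)
        omega
      obtain ⟨T, hTle, hTtree⟩ := ih G' hG'conn hcard
      exact ⟨T, le_trans hTle sdiff_le, hTtree⟩


private lemma even_card_symmdiff {α : Type*} [DecidableEq α] (s t : Finset α)
    (h : s.card % 2 = t.card % 2) : Even ((s \ t ∪ t \ s).card) := by
  have h1 : (s ∩ t).card + (s \ t).card = s.card := Finset.card_inter_add_card_sdiff s t
  have h2 : (t ∩ s).card + (t \ s).card = t.card := Finset.card_inter_add_card_sdiff t s
  have h3 : (s \ t ∪ t \ s).card = (s \ t).card + (t \ s).card :=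
    Finset.card_union_of_disjoint disjoint_sdiff_sdiff
  have h4 : (s ∩ t).card = (t ∩ s).card := by rw [Finset.inter_comm]
  rw [Nat.even_iff]
  omega

private lemma filter_toFinset_card_eq_countP {l : List (Sym2 V)} (hl : l.Nodup) (w : V) :
    (l.toFinset.filter (fun e => w ∈ e)).card = l.countP (fun e => decide (w ∈ e)) := by
  rw [List.countP_eq_length_filter, ← List.toFinset_card_of_nodup (hl.filter _),
    List.toFinset_filter]
  congr 1
  simp only [decide_eq_true_eq]

end Helpers

/-- A connected graph with `n` vertices and feedback edge set number `k`
(i.e., exactly `n - 1 + k` edges) contains at most `2 ^ k * n.choose 2` distinct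
(unordered) paths with at least one edge.  Since every such path corresponds to
exactly two directed paths (one for each orientation), this is stated as: the
number of directed paths with distinct endpoints is at most `2 * (2 ^ k * n.choose 2)`. -/
theorem path_count_le_of_feedback_edge_set {V : Type*} [Fintype V] [DecidableEq V]
    (G : SimpleGraph V) [DecidableRel G.Adj] (n k : ℕ)
    (hconn : G.Connected) (hn : Fintype.card V = n)
    (hedges : G.edgeFinset.card = n - 1 + k) :
    Nat.card {x : (u : V) × (v : V) × G.Path u v // x.1 ≠ x.2.1} ≤
      2 * (2 ^ k * n.choose 2) := by
  classical
  obtain ⟨T, hTle, hTtree⟩ := exists_spanning_tree G hconn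
  have h1n : 1 ≤ n := hn ▸ (@Fintype.card_pos V _ ⟨hconn.nonempty.some⟩)
  have hTE : T.edgeFinset.card = n - 1 := by
    have := hTtree.card_edgeFinset
    omega
  have hsubE : T.edgeFinset ⊆ G.edgeFinset := edgeFinset_mono hTle
  set N : Finset (Sym2 V) := G.edgeFinset \ T.edgeFinset with hNdef
  have hN : N.card = k := by
    rw [hNdef, Finset.card_sdiff_of_subset hsubE, hedges, hTE]
    omega
  -- the injection
  set f : {x : (u : V) × (v : V) × G.Path u v // x.1 ≠ x.2.1} →
      ({y : V × V // y.1 ≠ y.2} × {s : Finset (Sym2 V) // s ⊆ N}) :=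
    fun x => (⟨(x.1.1, x.1.2.1), x.2⟩,
      ⟨(x.1.2.2 : G.Walk x.1.1 x.1.2.1).edges.toFinset \ T.edgeFinset,
        Finset.sdiff_subset_sdiff
          (fun e he => mem_edgeFinset.mpr
            ((x.1.2.2 : G.Walk x.1.1 x.1.2.1).edges_subset_edgeSet (List.mem_toFinset.mp he)))
          (le_refl _)⟩) with hfdef
  have hinj : Function.Injective f := by
    rintro ⟨⟨u, v, p⟩, hne1⟩ ⟨⟨u', v', q⟩, hne2⟩ hfeq
    simp only [hfdef, Prod.mk.injEq, Subtype.mk.injEq, Prod.ext_iff] at hfeq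
    obtain ⟨⟨h1, h2⟩, hDD⟩ := hfeq
    subst h1
    subst h2
    set A : Finset (Sym2 V) := (p : G.Walk u v).edges.toFinset with hA
    set B : Finset (Sym2 V) := (q : G.Walk u v).edges.toFinset with hB
    have hsd : ∀ e ∈ (A \ B ∪ B \ A), e ∈ T.edgeSet := by
      intro e he
      rw [Finset.mem_union, Finset.mem_sdiff, Finset.mem_sdiff] at he
      by_contra het
      have hetf : e ∉ T.edgeFinset := fun h => het (mem_edgeFinset.mp h)
      rcases he with ⟨heA, heB⟩ | ⟨heB, heA⟩
      · have : e ∈ A \ T.edgeFinset := Finset.mem_sdiff.mpr ⟨heA, hetf⟩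
        rw [hDD] at this
        exact heB (Finset.mem_sdiff.mp this).1
      · have : e ∈ B \ T.edgeFinset := Finset.mem_sdiff.mpr ⟨heB, hetf⟩
        rw [← hDD] at this
        exact heA (Finset.mem_sdiff.mp this).1
    have hdeg : ∀ w : V, Even (((A \ B ∪ B \ A)).filter (fun e => w ∈ e)).card := by
      intro w
      have hfilter : (A \ B ∪ B \ A).filter (fun e => w ∈ e) =
          (A.filter (fun e => w ∈ e)) \ (B.filter (fun e => w ∈ e)) ∪
          (B.filter (fun e => w ∈ e)) \ (A.filter (fun e => w ∈ e)) := by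
        ext e
        simp only [Finset.mem_filter, Finset.mem_union, Finset.mem_sdiff]
        tauto
      rw [hfilter]
      apply even_card_symmdiff
      rw [hA, hB,
        filter_toFinset_card_eq_countP (p.2.isTrail.edges_nodup) w,
        filter_toFinset_card_eq_countP (q.2.isTrail.edges_nodup) w,
        countP_edges_parity (p : G.Walk u v) w, countP_edges_parity (q : G.Walk u v) w]
    have hDempty := even_subgraph_of_acyclic_empty hTtree.2 (A \ B ∪ B \ A) hsd hdeg
    rw [Finset.union_eq_empty] at hDempty
    have hAB : A = B :=
      Finset.Subset.antisymm
        ((Finset.sdiff_eq_empty_iff_subset).mp hDempty.1)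
        ((Finset.sdiff_eq_empty_iff_subset).mp hDempty.2)
    have hpq : (p : G.Walk u v) = (q : G.Walk u v) := by
      refine walk_eq_of_edges_iff _ _ p.2 q.2 fun e => ?_
      rw [← List.mem_toFinset, ← List.mem_toFinset (l := (q : G.Walk u v).edges), ← hA, ← hB, hAB]
    have : p = q := Subtype.ext hpq
    rw [this]
  have hcount := Nat.card_le_card_of_injective f hinj
  rw [Nat.card_prod] at hcount
  have hpairs : Nat.card {y : V × V // y.1 ≠ y.2} = n * n - n := by
    rw [Nat.card_eq_fintype_card]
    have h1 : Fintype.card {y : V × V // y.1 = y.2} = n := by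
      rw [← hn]
      exact Fintype.card_congr
        ⟨fun y => y.1.1, fun v => ⟨(v, v), rfl⟩,
          by rintro ⟨⟨a, b⟩, (rfl : a = b)⟩; rfl, fun v => rfl⟩
    have h2 := Fintype.card_subtype_compl (fun y : V × V => y.1 = y.2)
    rw [h1, Fintype.card_prod, hn] at h2
    calc Fintype.card {y : V × V // y.1 ≠ y.2}
        = Fintype.card {y : V × V // ¬ y.1 = y.2} := Fintype.card_congr (Equiv.refl _)
      _ = n * n - n := h2
  have hsubsets : Nat.card {s : Finset (Sym2 V) // s ⊆ N} = 2 ^ k := by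
    rw [Nat.card_eq_fintype_card]
    rw [Fintype.card_congr (Equiv.subtypeEquivRight (fun s => (Finset.mem_powerset).symm))]
    rw [Fintype.card_coe, Finset.card_powerset, hN]
  rw [hpairs, hsubsets] at hcount
  obtain ⟨m, rfl⟩ : ∃ m, n = m + 1 := ⟨n - 1, by omega⟩
  obtain ⟨c, hc⟩ := Nat.even_mul_succ_self m
  have hch : (m + 1).choose 2 = c := by
    rw [Nat.choose_two_right, Nat.succ_sub_one, mul_comm, hc]
    omega
  have hnn : (m + 1) * (m + 1) - (m + 1) = c + c := by
    rw [Nat.mul_succ, Nat.add_sub_cancel, mul_comm, hc]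
  calc Nat.card {x : (u : V) × (v : V) × G.Path u v // x.1 ≠ x.2.1}
      ≤ ((m + 1) * (m + 1) - (m + 1)) * 2 ^ k := hcount
    _ = 2 * (2 ^ k * (m + 1).choose 2) := by rw [hnn, hch]; ring
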